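/- arXiv:2602.23884 — 2 statements merged into one kernel-verified Lean document; each statement's English description precedes it below -/
import Mathlib

section
/- Let G and H be finite simple graphs with G connected. If there exist vertex covers U and L of the empty bisector graph Ĝ such that (U,L) is a forward-equalized pair of G, |U ∩ L| = β*(G) and |U| = β(Ĝ), then ξ(G⊙H) = β(Ĝ)·n(H) + α(Ĝ) + β*(G). -/
universe u v

variable {V : Type u} {W : Type v}

/-- A distance-equalizer set of a graph: for every pair of distinct vertices outside `S`
there is a vertex of `S` equidistant to both. -/
def IsDistEqSet {α : Type*} (G : SimpleGraph α) (S : Set α) : Prop :=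
  ∀ ⦃x y : α⦄, x ∉ S → y ∉ S → x ≠ y → ∃ w ∈ S, G.dist w x = G.dist w y

/-- The equidistant dimension of a graph: the minimum cardinality of a distance-equalizer set. -/
noncomputable def eqdim {α : Type*} (G : SimpleGraph α) : ℕ :=
  sInf {n | ∃ S : Set α, IsDistEqSet G S ∧ S.ncard = n}

/-- The bisector of two vertices: vertices equidistant to both. -/
def bisector {α : Type*} (G : SimpleGraph α) (x y : α) : Set α :=
  {w | G.dist w x = G.dist w y}

/-- The empty bisector graph of `G`: two distinct vertices are adjacent iff their bisector
in `G` is empty. -/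
def emptyBisector {α : Type*} (G : SimpleGraph α) : SimpleGraph α where
  Adj x y := x ≠ y ∧ bisector G x y = ∅
  symm := by
    constructor
    rintro x y ⟨h1, h2⟩
    refine ⟨h1.symm, Set.eq_empty_iff_forall_notMem.mpr fun w hw => ?_⟩
    exact Set.eq_empty_iff_forall_notMem.mp h2 w
      ((show G.dist w y = G.dist w x from hw).symm)
  loopless := ⟨fun _ h => h.1 rfl⟩

/-- A vertex cover of a graph: a set of vertices meeting every edge. -/
def IsVertexCover {α : Type*} (G : SimpleGraph α) (C : Set α) : Prop :=
  ∀ ⦃x y : α⦄, G.Adj x y → x ∈ C ∨ y ∈ C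

/-- An independent set of a graph: a set of pairwise non-adjacent vertices. -/
def IsIndepSet {α : Type*} (G : SimpleGraph α) (A : Set α) : Prop :=
  ∀ ⦃x y : α⦄, x ∈ A → y ∈ A → ¬ G.Adj x y

/-- The vertex cover number `β(G)`. -/
noncomputable def vcNum {α : Type*} (G : SimpleGraph α) : ℕ :=
  sInf {n | ∃ C : Set α, IsVertexCover G C ∧ C.ncard = n}

/-- The independence number `α(G)`. -/
noncomputable def indepNum {α : Type*} (G : SimpleGraph α) : ℕ :=
  sSup {n | ∃ A : Set α, IsIndepSet G A ∧ A.ncard = n}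

/-- A forward-equalized pair `(X, Y)` of `G`: `X ∪ Y = V(G)` and for every
`a ∈ X \ Y` and `b ∈ Y \ X` there is `w` with `d(w,a) = d(w,b) + 1`. -/
def IsForwardEqualizedPair {α : Type*} (G : SimpleGraph α) (X Y : Set α) : Prop :=
  X ∪ Y = Set.univ ∧
  ∀ ⦃a⦄, a ∈ X \ Y → ∀ ⦃b⦄, b ∈ Y \ X → ∃ w, G.dist w a = G.dist w b + 1

/-- `β*(G)`: the minimum of `|X ∩ Y|` over all pairs of vertex covers `X, Y` of the
empty bisector graph of `G` such that `(X, Y)` is a forward-equalized pair of `G`. -/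
noncomputable def betaStar {α : Type*} (G : SimpleGraph α) : ℕ :=
  sInf {n | ∃ X Y : Set α,
    IsVertexCover (emptyBisector G) X ∧ IsVertexCover (emptyBisector G) Y ∧
    IsForwardEqualizedPair G X Y ∧ (X ∩ Y).ncard = n}

/-- The corona product `G ⊙ H`: one copy of `H` for each vertex `i` of `G` (the vertices
`Sum.inr (i, w)`), with `i` joined to every vertex of its copy. -/
def corona (G : SimpleGraph V) (H : SimpleGraph W) : SimpleGraph (V ⊕ V × W) where
  Adj x y :=
    match x, y with
    | Sum.inl a, Sum.inl b => G.Adj a b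
    | Sum.inl a, Sum.inr p => a = p.1
    | Sum.inr p, Sum.inl a => a = p.1
    | Sum.inr p, Sum.inr q => p.1 = q.1 ∧ H.Adj p.2 q.2
  symm := by
    constructor
    rintro (a | p) (b | q) h
    · exact h.symm
    · exact h
    · exact h
    · exact ⟨h.1.symm, h.2.symm⟩
  loopless := by
    constructor
    rintro (a | p) h
    · exact G.loopless.irrefl a h
    · exact H.loopless.irrefl p.2 h.2

open Sum

section CoronaDist

variable {V : Type u} {W : Type v} (G : SimpleGraph V) (H : SimpleGraph W)

/-- projection to the base graph -/
def cpj : V ⊕ V × W → V := Sum.elim id Prod.fst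

/-- type indicator -/
def ct : V ⊕ V × W → ℕ := Sum.elim (fun _ => 0) (fun _ => 1)

@[simp] lemma cpj_inl (a : V) : cpj (inl a : V ⊕ V × W) = a := rfl
@[simp] lemma cpj_inr (p : V × W) : cpj (inr p : V ⊕ V × W) = p.1 := rfl
@[simp] lemma ct_inl (a : V) : ct (inl a : V ⊕ V × W) = 0 := rfl
@[simp] lemma ct_inr (p : V × W) : ct (inr p : V ⊕ V × W) = 1 := rfl

variable {G H}

lemma corona_proj {x y : V ⊕ V × W} (p : (corona G H).Walk x y) :
    ∃ q : G.Walk (cpj x) (cpj y), q.length + ct y ≤ p.length + ct x := by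
  induction p with
  | nil => exact ⟨SimpleGraph.Walk.nil, le_rfl⟩
  | @cons x x' y h p ih =>
    obtain ⟨q', hq'⟩ := ih
    cases x with
    | inl a =>
      cases x' with
      | inl b =>
        refine ⟨SimpleGraph.Walk.cons (h : G.Adj a b) q', ?_⟩
        have h1 : q'.length + ct y ≤ p.length + 0 := hq'
        show q'.length + 1 + ct y ≤ p.length + 1 + 0
        omega
      | inr p' =>
        have ha : a = p'.1 := h
        subst ha
        refine ⟨q', ?_⟩
        have h1 : q'.length + ct y ≤ p.length + 1 := hq'
        show q'.length + ct y ≤ p.length + 1 + 0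
        omega
    | inr p' =>
      cases x' with
      | inl a =>
        have ha : a = p'.1 := h
        subst ha
        refine ⟨q', ?_⟩
        have h1 : q'.length + ct y ≤ p.length + 0 := hq'
        show q'.length + ct y ≤ p.length + 1 + 1
        omega
      | inr q'' =>
        obtain ⟨i, z⟩ := p'
        obtain ⟨k, z'⟩ := q''
        have h1 : i = k := h.1
        subst h1
        refine ⟨q', ?_⟩
        have h1 : q'.length + ct y ≤ p.length + 1 := hq'
        show q'.length + ct y ≤ p.length + 1 + 1
        omega

end CoronaDist

section CoronaDist2

open SimpleGraph

variable {V : Type u} {W : Type v} {G : SimpleGraph V} {H : SimpleGraph W}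

/-- the inclusion of `G` in the corona as a graph homomorphism -/
def coronaHomInl (G : SimpleGraph V) (H : SimpleGraph W) : G →g corona G H :=
  ⟨Sum.inl, fun h => h⟩

lemma corona_connected (hG : G.Connected) : (corona G H).Connected := by
  have hne : Nonempty V := hG.nonempty
  rw [SimpleGraph.connected_iff]
  refine ⟨fun x y => ?_, ⟨inl hne.some⟩⟩
  have key : ∀ z : V ⊕ V × W, (corona G H).Reachable z (inl (cpj z)) := by
    rintro (a | ⟨i, w⟩)
    · exact Reachable.refl _
    · exact SimpleGraph.Adj.reachable (by exact rfl : (corona G H).Adj (inr (i,w)) (inl i))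
  refine (key x).trans (Reachable.trans ?_ (key y).symm)
  exact SimpleGraph.Reachable.map (coronaHomInl G H) (hG.preconnected _ _)

variable (hG : G.Connected)
include hG

lemma corona_dist_inl_inl (a b : V) :
    (corona G H).dist (inl a) (inl b) = G.dist a b := by
  refine le_antisymm ?_ ?_
  · obtain ⟨q, hq⟩ := hG.exists_walk_length_eq_dist a b
    calc (corona G H).dist (inl a) (inl b) ≤ (q.map (coronaHomInl G H)).length :=
          SimpleGraph.dist_le _
      _ = G.dist a b := by rw [SimpleGraph.Walk.length_map, hq]
  · obtain ⟨p, hp⟩ := (corona_connected hG).exists_walk_length_eq_dist (inl a : V ⊕ V × W) (inl b)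
    obtain ⟨q, hq⟩ := corona_proj p
    simp only [ct_inl, add_zero, cpj_inl] at hq
    calc G.dist a b ≤ q.length := SimpleGraph.dist_le _
      _ ≤ p.length := hq
      _ = _ := hp

lemma corona_dist_inl_inr (a j : V) (w : W) :
    (corona G H).dist (inl a) (inr (j, w)) = G.dist a j + 1 := by
  refine le_antisymm ?_ ?_
  · obtain ⟨q, hq⟩ := hG.exists_walk_length_eq_dist a j
    have hadj : (corona G H).Adj (inl j) (inr (j, w)) := rfl
    calc (corona G H).dist (inl a) (inr (j, w))
        ≤ ((q.map (coronaHomInl G H)).concat hadj).length := SimpleGraph.dist_le _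
      _ = G.dist a j + 1 := by
          have e := SimpleGraph.Walk.length_concat (q.map (coronaHomInl G H)) hadj
          rw [SimpleGraph.Walk.length_map, hq] at e
          exact e
  · obtain ⟨p, hp⟩ :=
      (corona_connected hG).exists_walk_length_eq_dist (inl a : V ⊕ V × W) (inr (j, w))
    obtain ⟨q, hq⟩ := corona_proj p
    simp only [ct_inl, add_zero, ct_inr, cpj_inl, cpj_inr] at hq
    calc G.dist a j + 1 ≤ q.length + 1 := by
          have := SimpleGraph.dist_le q
          simp only [cpj_inl, cpj_inr] at this
          exact Nat.add_le_add_right this 1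
      _ ≤ p.length := hq
      _ = _ := hp

lemma corona_dist_inr_inl (a j : V) (w : W) :
    (corona G H).dist (inr (j, w)) (inl a) = G.dist a j + 1 := by
  rw [SimpleGraph.dist_comm]; exact corona_dist_inl_inr hG a j w

lemma corona_dist_inr_inr_ne {i j : V} (hij : i ≠ j) (z : W) (w : W) :
    (corona G H).dist (inr (i, z)) (inr (j, w)) = G.dist i j + 2 := by
  refine le_antisymm ?_ ?_
  · obtain ⟨q, hq⟩ := hG.exists_walk_length_eq_dist i j
    have hadj1 : (corona G H).Adj (inr (i, z)) (inl i) := rfl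
    have hadj2 : (corona G H).Adj (inl j) (inr (j, w)) := rfl
    calc (corona G H).dist (inr (i, z)) (inr (j, w))
        ≤ (SimpleGraph.Walk.cons hadj1 ((q.map (coronaHomInl G H)).concat hadj2)).length :=
          SimpleGraph.dist_le _
      _ = G.dist i j + 2 := by
          have e := SimpleGraph.Walk.length_concat (q.map (coronaHomInl G H)) hadj2
          rw [SimpleGraph.Walk.length_map, hq] at e
          have e2 : (SimpleGraph.Walk.cons hadj1 ((q.map (coronaHomInl G H)).concat hadj2)).length
              = ((q.map (coronaHomInl G H)).concat hadj2).length + 1 := rfl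
          omega
  · obtain ⟨p, hp⟩ :=
      (corona_connected hG).exists_walk_length_eq_dist (inr (i, z) : V ⊕ V × W) (inr (j, w))
    rw [← hp]; clear hp
    have main : ∀ (x y : V ⊕ V × W) (p : (corona G H).Walk x y) (i' j' : V) (z' w' : W),
        x = inr (i', z') → y = inr (j', w') → i' ≠ j' → G.dist i' j' + 2 ≤ p.length := by
      intro x y p
      induction p with
      | nil =>
        rintro i' j' z' w' rfl hy hne
        exact absurd (by injection (Sum.inr.inj hy)) hne
      | @cons x x' y h p ih =>
        rintro i' j' z' w' rfl rfl hne
        cases x' with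
        | inl k =>
          have hk : k = i' := h
          subst hk
          obtain ⟨q, hq⟩ := corona_proj p
          simp only [ct_inl, ct_inr, cpj_inl, cpj_inr, add_zero] at hq
          have := SimpleGraph.dist_le q
          simp only [cpj_inl, cpj_inr] at this
          simp only [SimpleGraph.Walk.length_cons]
          omega
        | inr p' =>
          obtain ⟨k, z''⟩ := p'
          have hk : i' = k := h.1
          subst hk
          have := ih _ j' z'' w' rfl rfl hne
          simp only [SimpleGraph.Walk.length_cons]
          omega
    exact main _ _ p i j z w rfl rfl hij

omit hG in
lemma corona_dist_inr_inr_same_adj {i : V} {z w : W} (h : H.Adj z w) :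
    (corona G H).dist (inr (i, z)) (inr (i, w)) = 1 := by
  rw [SimpleGraph.dist_eq_one_iff_adj]
  exact ⟨rfl, h⟩

lemma corona_dist_inr_inr_same_nadj {i : V} {z w : W} (hzw : z ≠ w) (h : ¬ H.Adj z w) :
    (corona G H).dist (inr (i, z)) (inr (i, w)) = 2 := by
  have h1 : (corona G H).dist (inr (i, z)) (inr (i, w)) ≤ 2 := by
    have hadj1 : (corona G H).Adj (inr (i, z)) (inl i) := rfl
    have hadj2 : (corona G H).Adj (inl i) (inr (i, w)) := rfl
    calc (corona G H).dist (inr (i, z)) (inr (i, w))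
        ≤ (SimpleGraph.Walk.cons hadj1 (SimpleGraph.Walk.cons hadj2 SimpleGraph.Walk.nil)).length
          := SimpleGraph.dist_le _
      _ = 2 := rfl
  have h0 : (corona G H).dist (inr (i, z)) (inr (i, w)) ≠ 0 := by
    have : (inr (i, z) : V ⊕ V × W) ≠ inr (i, w) := by
      intro hc; exact hzw (by injection (Sum.inr.inj hc))
    exact Nat.pos_iff_ne_zero.mp ((corona_connected hG).pos_dist_of_ne this)
  have hne1 : (corona G H).dist (inr (i, z)) (inr (i, w)) ≠ 1 := by
    intro hc
    rw [SimpleGraph.dist_eq_one_iff_adj] at hc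
    exact h hc.2
  omega

end CoronaDist2

section Numbers

set_option linter.unusedSectionVars false

variable {α : Type*} [Fintype α] {Γ : SimpleGraph α}

lemma vcNum_le {C : Set α} (hC : IsVertexCover Γ C) : vcNum Γ ≤ C.ncard :=
  Nat.sInf_le ⟨C, hC, rfl⟩

lemma exists_min_cover : ∃ C : Set α, IsVertexCover Γ C ∧ C.ncard = vcNum Γ := by
  have hne : {n | ∃ C : Set α, IsVertexCover Γ C ∧ C.ncard = n}.Nonempty :=
    ⟨(Set.univ : Set α).ncard, Set.univ, fun x y _ => Or.inl trivial, rfl⟩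
  exact Nat.sInf_mem hne

lemma indep_compl_cover {A : Set α} (hA : IsIndepSet Γ A) : IsVertexCover Γ Aᶜ := by
  intro x y hadj
  by_contra hc
  push_neg at hc
  simp only [Set.mem_compl_iff, not_not] at hc
  exact hA hc.1 hc.2 hadj

lemma cover_compl_indep {C : Set α} (hC : IsVertexCover Γ C) : IsIndepSet Γ Cᶜ := by
  intro x y hx hy hadj
  rcases hC hadj with h | h
  · exact hx h
  · exact hy h

lemma indep_ncard_le {A : Set α} (hA : IsIndepSet Γ A) :
    A.ncard ≤ Fintype.card α - vcNum Γ := by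
  have h1 : vcNum Γ ≤ Aᶜ.ncard := vcNum_le (indep_compl_cover hA)
  have h2 : A.ncard + Aᶜ.ncard = Fintype.card α := by
    rw [Set.ncard_add_ncard_compl, Nat.card_eq_fintype_card]
  omega

lemma indepNum_eq_gallai (Γ : SimpleGraph α) :
    indepNum Γ = Fintype.card α - vcNum Γ := by
  refine le_antisymm ?_ ?_
  · refine csSup_le ⟨0, ∅, fun x y hx => absurd hx (Set.notMem_empty x), Set.ncard_empty _⟩ ?_
    rintro n ⟨A, hA, rfl⟩
    exact indep_ncard_le hA
  · obtain ⟨C, hC, hCcard⟩ := exists_min_cover (Γ := Γ)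
    have h2 : C.ncard + Cᶜ.ncard = Fintype.card α := by
      rw [Set.ncard_add_ncard_compl, Nat.card_eq_fintype_card]
    refine le_csSup ⟨Fintype.card α, ?_⟩ ⟨Cᶜ, cover_compl_indep hC, by omega⟩
    rintro n ⟨A, hA, rfl⟩
    calc A.ncard ≤ (Set.univ : Set α).ncard := Set.ncard_le_ncard (Set.subset_univ A)
      _ = Fintype.card α := by rw [Set.ncard_univ, Nat.card_eq_fintype_card]

lemma betaStar_le {G : SimpleGraph α} {X Y : Set α}
    (hX : IsVertexCover (emptyBisector G) X) (hY : IsVertexCover (emptyBisector G) Y)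
    (hFE : IsForwardEqualizedPair G X Y) : betaStar G ≤ (X ∩ Y).ncard :=
  Nat.sInf_le ⟨X, Y, hX, hY, hFE, rfl⟩

end Numbers

section Upper

open SimpleGraph

variable {G : SimpleGraph V} {H : SimpleGraph W}

variable (U L : Set V)

/-- the candidate distance-equalizer set -/
def desSet : Set (V ⊕ V × W) := Sum.inl '' L ∪ Sum.inr '' (U ×ˢ (Set.univ : Set W))

variable {U L}

lemma mem_desSet_inl {i : V} : (inl i : V ⊕ V × W) ∈ desSet U L ↔ i ∈ L := by
  simp [desSet]

lemma mem_desSet_inr {j : V} {w : W} : (inr (j, w) : V ⊕ V × W) ∈ desSet U L ↔ j ∈ U := by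
  simp [desSet]

lemma not_adj_eb {i j : V} (hC : _root_.IsVertexCover (emptyBisector G) L)
    (hi : i ∉ L) (hj : j ∉ L) (hij : i ≠ j) :
    ∃ k, G.dist k i = G.dist k j := by
  have hnadj : ¬ (emptyBisector G).Adj i j := by
    intro h
    rcases hC h with h' | h'
    · exact hi h'
    · exact hj h'
  simp only [emptyBisector, ne_eq] at hnadj
  rw [not_and] at hnadj
  have := hnadj hij
  rcases Set.eq_empty_or_nonempty (bisector G i j) with h | ⟨k, hk⟩
  · exact absurd h this
  · exact ⟨k, hk⟩

variable [Nonempty W] (hG : G.Connected)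
include hG

lemma upper_isDES (hU : _root_.IsVertexCover (emptyBisector G) U)
    (hL : _root_.IsVertexCover (emptyBisector G) L)
    (hFE : IsForwardEqualizedPair G U L) :
    IsDistEqSet (corona G H) (desSet U L) := by
  obtain ⟨hUL, hfwd⟩ := hFE
  have hULmem : ∀ k : V, k ∈ U ∨ k ∈ L := by
    intro k
    have : k ∈ U ∪ L := hUL ▸ Set.mem_univ k
    exact this
  set w0 : W := Classical.arbitrary W with hw0
  -- the asymmetric key cases
  have key1 : ∀ i j : V, i ∉ L → j ∉ L → i ≠ j →
      ∃ s ∈ desSet U L, (corona G H).dist s (inl i) = (corona G H).dist s (inl j) := by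
    intro i j hi hj hij
    obtain ⟨k, hk⟩ := not_adj_eb hL hi hj hij
    rcases hULmem k with hkU | hkL
    · refine ⟨inr (k, w0), mem_desSet_inr.mpr hkU, ?_⟩
      rw [corona_dist_inr_inl hG, corona_dist_inr_inl hG,
        SimpleGraph.dist_comm (u := i), SimpleGraph.dist_comm (u := j), hk]
    · refine ⟨inl k, mem_desSet_inl.mpr hkL, ?_⟩
      rw [corona_dist_inl_inl hG, corona_dist_inl_inl hG, hk]
  have key2 : ∀ (i j : V) (w : W), i ∉ L → j ∉ U →
      ∃ s ∈ desSet U L,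
        (corona G H).dist s (inl i) = (corona G H).dist s (inr (j, w)) := by
    intro i j w hi hj
    have hiU : i ∈ U := (hULmem i).resolve_right hi
    have hjL : j ∈ L := (hULmem j).resolve_left hj
    obtain ⟨k, hk⟩ := hfwd ⟨hiU, hi⟩ ⟨hjL, hj⟩
    rcases hULmem k with hkU | hkL
    · have hkj : k ≠ j := fun h => hj (h ▸ hkU)
      refine ⟨inr (k, w0), mem_desSet_inr.mpr hkU, ?_⟩
      rw [corona_dist_inr_inl hG, corona_dist_inr_inr_ne hG hkj,
        SimpleGraph.dist_comm (u := i), hk]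
    · refine ⟨inl k, mem_desSet_inl.mpr hkL, ?_⟩
      rw [corona_dist_inl_inl hG, corona_dist_inl_inr hG, hk]
  have key3 : ∀ (i j : V) (w w' : W), i ∉ U → j ∉ U → (inr (i, w) : V ⊕ V × W) ≠ inr (j, w') →
      ∃ s ∈ desSet U L,
        (corona G H).dist s (inr (i, w)) = (corona G H).dist s (inr (j, w')) := by
    intro i j w w' hi hj hne
    by_cases hij : i = j
    · subst hij
      have hiL : i ∈ L := (hULmem i).resolve_left hi
      refine ⟨inl i, mem_desSet_inl.mpr hiL, ?_⟩
      rw [corona_dist_inl_inr hG, corona_dist_inl_inr hG]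
    · obtain ⟨k, hk⟩ := not_adj_eb hU hi hj hij
      rcases hULmem k with hkU | hkL
      · have hki : k ≠ i := fun h => hi (h ▸ hkU)
        have hkj : k ≠ j := fun h => hj (h ▸ hkU)
        refine ⟨inr (k, w0), mem_desSet_inr.mpr hkU, ?_⟩
        rw [corona_dist_inr_inr_ne hG hki, corona_dist_inr_inr_ne hG hkj, hk]
      · refine ⟨inl k, mem_desSet_inl.mpr hkL, ?_⟩
        rw [corona_dist_inl_inr hG, corona_dist_inl_inr hG, hk]
  rintro (i | ⟨i, w⟩) (j | ⟨j, w'⟩) hx hy hne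
  · exact key1 i j (fun h => hx (mem_desSet_inl.mpr h)) (fun h => hy (mem_desSet_inl.mpr h))
      (fun h => hne (by rw [h]))
  · exact key2 i j w' (fun h => hx (mem_desSet_inl.mpr h))
      (fun h => hy (mem_desSet_inr.mpr h))
  · obtain ⟨s, hs, heq⟩ := key2 j i w (fun h => hy (mem_desSet_inl.mpr h))
      (fun h => hx (mem_desSet_inr.mpr h))
    exact ⟨s, hs, heq.symm⟩
  · exact key3 i j w w' (fun h => hx (mem_desSet_inr.mpr h))
      (fun h => hy (mem_desSet_inr.mpr h)) hne

end Upper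

section UpperCard

variable [Fintype V] [Fintype W] {U L : Set V}

lemma desSet_ncard : (desSet U L : Set (V ⊕ V × W)).ncard = L.ncard + U.ncard * Fintype.card W := by
  classical
  have hdisj : Disjoint (Sum.inl '' L : Set (V ⊕ V × W)) (Sum.inr '' (U ×ˢ (Set.univ : Set W))) := by
    rw [Set.disjoint_iff_forall_ne]
    rintro x ⟨a, _, rfl⟩ y ⟨p, _, rfl⟩
    simp
  rw [desSet, Set.ncard_union_eq hdisj (Set.toFinite _) (Set.toFinite _),
    Set.ncard_image_of_injective _ Sum.inl_injective,
    Set.ncard_image_of_injective _ Sum.inr_injective]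
  congr 1
  rw [Set.ncard_eq_toFinset_card', Set.toFinset_prod, Finset.card_product,
    ← Set.ncard_eq_toFinset_card', Set.toFinset_univ, Finset.card_univ]

end UpperCard

section Lower

open SimpleGraph

variable [Fintype V] [Fintype W] [Nonempty W] {G : SimpleGraph V} {H : SimpleGraph W}

lemma ncard_prod_univ (B : Set V) :
    (B ×ˢ (Set.univ : Set W)).ncard = B.ncard * Fintype.card W := by
  classical
  rw [Set.ncard_eq_toFinset_card', Set.toFinset_prod, Finset.card_product,
    ← Set.ncard_eq_toFinset_card', Set.toFinset_univ, Finset.card_univ]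

lemma lower_bound (hG : G.Connected) {S : Set (V ⊕ V × W)}
    (hS : IsDistEqSet (corona G H) S) :
    vcNum (emptyBisector G) * Fintype.card W +
      (Fintype.card V - vcNum (emptyBisector G)) + betaStar G ≤ S.ncard := by
  classical
  set A : Set V := {i : V | (inl i : V ⊕ V × W) ∈ S} with hA_def
  set B : Set V := {i : V | ∀ w : W, (inr (i, w) : V ⊕ V × W) ∈ S} with hB_def
  have memA : ∀ i : V, i ∈ A ↔ (inl i : V ⊕ V × W) ∈ S := fun i => by
    rw [hA_def]; exact Iff.rfl
  have memB : ∀ i : V, i ∈ B ↔ ∀ w : W, (inr (i, w) : V ⊕ V × W) ∈ S := fun i => by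
    rw [hB_def]; exact Iff.rfl
  have hbis : ∀ {i j : V}, (emptyBisector G).Adj i j → ∀ k, G.dist k i ≠ G.dist k j :=
    fun hadj k hk => Set.eq_empty_iff_forall_notMem.mp hadj.2 k hk
  -- A is a vertex cover of the empty bisector graph
  have hA : _root_.IsVertexCover (emptyBisector G) A := by
    intro i j hadj
    by_contra hc
    push_neg at hc
    obtain ⟨hi, hj⟩ := hc
    have hne : (inl i : V ⊕ V × W) ≠ inl j := fun h => hadj.1 (Sum.inl_injective h)
    obtain ⟨s, hs, heq⟩ := hS (fun h => hi ((memA i).mpr h)) (fun h => hj ((memA j).mpr h)) hne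
    rcases s with (k | ⟨k, z⟩)
    · rw [corona_dist_inl_inl hG, corona_dist_inl_inl hG] at heq
      exact hbis hadj k heq
    · rw [corona_dist_inr_inl hG, corona_dist_inr_inl hG] at heq
      refine hbis hadj k ?_
      rw [SimpleGraph.dist_comm (u := k) (v := i), SimpleGraph.dist_comm (u := k) (v := j)]
      omega
  -- B is a vertex cover of the empty bisector graph
  have hB : _root_.IsVertexCover (emptyBisector G) B := by
    intro i j hadj
    by_contra hc
    push_neg at hc
    obtain ⟨hi, hj⟩ := hc
    rw [memB] at hi hj
    push_neg at hi hj
    obtain ⟨w, hw⟩ := hi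
    obtain ⟨w', hw'⟩ := hj
    have hne : (inr (i, w) : V ⊕ V × W) ≠ inr (j, w') := by
      intro h
      exact hadj.1 (congrArg (fun p => (Sum.elim id Prod.fst p : V)) h)
    obtain ⟨s, hs, heq⟩ := hS hw hw' hne
    rcases s with (k | ⟨k, z⟩)
    · rw [corona_dist_inl_inr hG, corona_dist_inl_inr hG] at heq
      exact hbis hadj k (by omega)
    · by_cases hki : k = i
      · subst hki
        rw [corona_dist_inr_inr_ne hG hadj.1] at heq
        have hzw : z ≠ w := fun h => hw (h ▸ hs)
        have hle : (corona G H).dist (inr (k, z)) (inr (k, w)) ≤ 2 := by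
          by_cases hadj' : H.Adj z w
          · rw [corona_dist_inr_inr_same_adj hadj']; omega
          · rw [corona_dist_inr_inr_same_nadj hG hzw hadj']
        have hpos : 0 < G.dist k j := hG.pos_dist_of_ne hadj.1
        omega
      · by_cases hkj : k = j
        · subst hkj
          rw [corona_dist_inr_inr_ne hG (fun h => hadj.1 h.symm)] at heq
          have hzw : z ≠ w' := fun h => hw' (h ▸ hs)
          have hle : (corona G H).dist (inr (k, z)) (inr (k, w')) ≤ 2 := by
            by_cases hadj' : H.Adj z w'
            · rw [corona_dist_inr_inr_same_adj hadj']; omega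
            · rw [corona_dist_inr_inr_same_nadj hG hzw hadj']
          have hpos : 0 < G.dist k i := hG.pos_dist_of_ne (fun h => hadj.1 h.symm)
          omega
        · rw [corona_dist_inr_inr_ne hG hki, corona_dist_inr_inr_ne hG hkj] at heq
          exact hbis hadj k (by omega)
  -- if i is in neither A nor B, then S meets the copy of H at i
  have hChoice : ∀ i : V, i ∉ A → i ∉ B → ∃ z : W, (inr (i, z) : V ⊕ V × W) ∈ S := by
    intro i hi hiB
    rw [memB] at hiB
    push_neg at hiB
    obtain ⟨w0, hw0⟩ := hiB
    have hne : (inl i : V ⊕ V × W) ≠ inr (i, w0) := Sum.inl_ne_inr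
    obtain ⟨s, hs, heq⟩ := hS (fun h => hi ((memA i).mpr h)) hw0 hne
    rcases s with (k | ⟨k, z⟩)
    · by_cases hki : k = i
      · exact absurd hs (by rw [hki]; exact fun h => hi ((memA i).mpr h))
      · rw [corona_dist_inl_inl hG, corona_dist_inl_inr hG] at heq
        omega
    · by_cases hki : k = i
      · exact ⟨z, hki ▸ hs⟩
      · rw [corona_dist_inr_inl hG, corona_dist_inr_inr_ne hG hki] at heq
        rw [SimpleGraph.dist_comm (u := i)] at heq
        omega
  -- the forward condition (†)
  have hdag : ∀ i j : V, i ∉ A → j ∉ B → i ≠ j →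
      ∃ k, G.dist k i = G.dist k j + 1 := by
    intro i j hi hj hij
    rw [memB] at hj
    push_neg at hj
    obtain ⟨w0, hw0⟩ := hj
    have hne : (inl i : V ⊕ V × W) ≠ inr (j, w0) := Sum.inl_ne_inr
    obtain ⟨s, hs, heq⟩ := hS (fun h => hi ((memA i).mpr h)) hw0 hne
    rcases s with (k | ⟨k, z⟩)
    · rw [corona_dist_inl_inl hG, corona_dist_inl_inr hG] at heq
      exact ⟨k, heq⟩
    · rw [corona_dist_inr_inl hG] at heq
      by_cases hkj : k = j
      · subst hkj
        have hzw : z ≠ w0 := fun h => hw0 (h ▸ hs)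
        by_cases hadj' : H.Adj z w0
        · rw [corona_dist_inr_inr_same_adj hadj'] at heq
          have : G.dist i k = 0 := by omega
          exact absurd (hG.dist_eq_zero_iff.mp this) hij
        · rw [corona_dist_inr_inr_same_nadj hG hzw hadj'] at heq
          refine ⟨k, ?_⟩
          rw [SimpleGraph.dist_comm (u := k) (v := i), SimpleGraph.dist_self]
          omega
      · rw [corona_dist_inr_inr_ne hG hkj] at heq
        refine ⟨k, ?_⟩
        rw [SimpleGraph.dist_comm (u := k) (v := i)]
        omega
  -- β* ≤ |A ∩ B|
  have f2 : betaStar G ≤ (A ∩ B).ncard := by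
    have hYcov : _root_.IsVertexCover (emptyBisector G) (A ∪ Bᶜ) := by
      intro x y hadj
      rcases hA hadj with h | h
      · exact Or.inl (Or.inl h)
      · exact Or.inr (Or.inl h)
    have hFE' : IsForwardEqualizedPair G B (A ∪ Bᶜ) := by
      constructor
      · ext i
        simp only [Set.mem_union, Set.mem_compl_iff, Set.mem_univ, iff_true]
        tauto
      · rintro a ⟨haB, haY⟩ b ⟨_, hbB⟩
        simp only [Set.mem_union, Set.mem_compl_iff, not_or, not_not] at haY
        exact hdag a b haY.1 hbB (fun h => hbB (h ▸ haB))
    have hset : B ∩ (A ∪ Bᶜ) = A ∩ B := by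
      ext i
      simp only [Set.mem_inter_iff, Set.mem_union, Set.mem_compl_iff]
      tauto
    have := betaStar_le hB hYcov hFE'
    rwa [hset] at this
  -- choose a vertex of S in each copy over (A ∪ B)ᶜ
  have hchoice' : ∀ i : V, ∃ z : W, (i ∉ A ∧ i ∉ B) → (inr (i, z) : V ⊕ V × W) ∈ S := by
    intro i
    by_cases h : i ∉ A ∧ i ∉ B
    · obtain ⟨z, hz⟩ := hChoice i h.1 h.2
      exact ⟨z, fun _ => hz⟩
    · exact ⟨Classical.arbitrary W, fun hc => absurd hc h⟩
  choose g hg using hchoice'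
  -- the subset T of S used for counting
  set T1 : Set (V ⊕ V × W) := Sum.inl '' A with hT1
  set T2 : Set (V ⊕ V × W) := Sum.inr '' (B ×ˢ (Set.univ : Set W)) with hT2
  set T3 : Set (V ⊕ V × W) := (fun i => (inr (i, g i) : V ⊕ V × W)) '' ((A ∪ B)ᶜ) with hT3
  have hT1S : T1 ⊆ S := by
    rintro x ⟨a, ha, rfl⟩
    exact (memA a).mp ha
  have hT2S : T2 ⊆ S := by
    rintro x ⟨⟨b, w⟩, hb, rfl⟩
    exact (memB b).mp hb.1 w
  have hT3S : T3 ⊆ S := by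
    rintro x ⟨i, hi, rfl⟩
    simp only [Set.mem_compl_iff, Set.mem_union, not_or] at hi
    exact hg i ⟨hi.1, hi.2⟩
  have hd23 : Disjoint T2 T3 := by
    rw [Set.disjoint_iff_forall_ne]
    rintro x ⟨⟨b, w⟩, hb, rfl⟩ y ⟨i, hi, rfl⟩ h
    simp only [Set.mem_compl_iff, Set.mem_union, not_or] at hi
    have : b = i := congrArg (fun p => (Sum.elim id Prod.fst p : V)) h
    exact hi.2 (this ▸ hb.1)
  have hd123 : Disjoint T1 (T2 ∪ T3) := by
    rw [Set.disjoint_iff_forall_ne]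
    rintro x ⟨a, _, rfl⟩ y hy h
    rcases hy with ⟨⟨b, w⟩, _, rfl⟩ | ⟨i, _, rfl⟩ <;> exact Sum.inl_ne_inr h
  have hTcard : (T1 ∪ (T2 ∪ T3)).ncard =
      A.ncard + (B.ncard * Fintype.card W + ((A ∪ B)ᶜ).ncard) := by
    rw [Set.ncard_union_eq hd123 (Set.toFinite _) (Set.toFinite _),
      Set.ncard_union_eq hd23 (Set.toFinite _) (Set.toFinite _),
      hT1, hT2, hT3,
      Set.ncard_image_of_injective _ Sum.inl_injective,
      Set.ncard_image_of_injective _ Sum.inr_injective,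
      ncard_prod_univ,
      Set.ncard_image_of_injOn (fun i _ j _ h =>
        (Prod.mk.injEq _ _ _ _ ▸ (Sum.inr.injEq _ _ ▸ h : (i, g i) = (j, g j))).1)]
  have hST : (T1 ∪ (T2 ∪ T3)).ncard ≤ S.ncard :=
    Set.ncard_le_ncard (Set.union_subset hT1S (Set.union_subset hT2S hT3S)) (Set.toFinite _)
  -- arithmetic
  have f1 : vcNum (emptyBisector G) ≤ B.ncard := vcNum_le hB
  have f3 : A.ncard = (A ∩ B).ncard + (A \ B).ncard := by
    rw [← Set.ncard_union_eq (Set.disjoint_of_subset_left Set.inter_subset_right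
      Set.disjoint_sdiff_right) (Set.toFinite _) (Set.toFinite _)]
    congr 1
    ext i
    simp only [Set.mem_union, Set.mem_inter_iff, Set.mem_diff]
    tauto
  have f4 : (A \ B).ncard + ((A ∪ B)ᶜ).ncard = Bᶜ.ncard := by
    rw [← Set.ncard_union_eq (by
      rw [Set.disjoint_iff_forall_ne]
      rintro x hx y hy rfl
      simp only [Set.mem_diff] at hx
      simp only [Set.mem_compl_iff, Set.mem_union, not_or] at hy
      exact hy.1 hx.1) (Set.toFinite _) (Set.toFinite _)]
    congr 1
    ext i
    simp only [Set.mem_union, Set.mem_diff, Set.mem_compl_iff, not_or]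
    tauto
  have f5 : B.ncard + Bᶜ.ncard = Fintype.card V := by
    rw [Set.ncard_add_ncard_compl, Nat.card_eq_fintype_card]
  have f6 : 0 < Fintype.card W := Fintype.card_pos
  have e1 : vcNum (emptyBisector G) * Fintype.card W +
      (B.ncard - vcNum (emptyBisector G)) * Fintype.card W = B.ncard * Fintype.card W := by
    rw [← Nat.add_mul, Nat.add_sub_cancel' f1]
  have e2 : B.ncard - vcNum (emptyBisector G) ≤
      (B.ncard - vcNum (emptyBisector G)) * Fintype.card W :=
    Nat.le_mul_of_pos_right _ f6
  refine le_trans ?_ hST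
  rw [hTcard]
  generalize hP : vcNum (emptyBisector G) * Fintype.card W = P at e1 ⊢
  generalize hQ : (B.ncard - vcNum (emptyBisector G)) * Fintype.card W = Q at e1 e2
  generalize hR : B.ncard * Fintype.card W = R at e1 ⊢
  omega

end Lower

theorem eqdim_corona_eq_lower_bound' [Fintype V] [Fintype W] [Nonempty W]
    (G : SimpleGraph V) (H : SimpleGraph W) (hG : G.Connected)
    (U L : Set V) (hU : IsVertexCover (emptyBisector G) U)
    (hL : IsVertexCover (emptyBisector G) L)
    (hFE : IsForwardEqualizedPair G U L)
    (hcap : (U ∩ L).ncard = betaStar G)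
    (hUcard : U.ncard = vcNum (emptyBisector G)) :
    eqdim (corona G H) =
      vcNum (emptyBisector G) * Fintype.card W + indepNum (emptyBisector G) + betaStar G := by
  classical
  rw [indepNum_eq_gallai]
  have hLU : L \ U = Uᶜ := by
    ext i
    simp only [Set.mem_diff, Set.mem_compl_iff, and_iff_right_iff_imp]
    intro hiU
    have : i ∈ U ∪ L := hFE.1 ▸ Set.mem_univ i
    exact this.resolve_left hiU
  have hUc : U.ncard + Uᶜ.ncard = Fintype.card V := by
    rw [Set.ncard_add_ncard_compl, Nat.card_eq_fintype_card]
  have hLcard : L.ncard = (Fintype.card V - vcNum (emptyBisector G)) + betaStar G := by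
    have hsplit : L.ncard = (L ∩ U).ncard + (L \ U).ncard := by
      rw [← Set.ncard_union_eq (Set.disjoint_of_subset_left Set.inter_subset_right
        Set.disjoint_sdiff_right) (Set.toFinite _) (Set.toFinite _)]
      congr 1
      ext i
      simp only [Set.mem_union, Set.mem_inter_iff, Set.mem_diff]
      tauto
    rw [hsplit, hLU, Set.inter_comm, hcap]
    omega
  have hmem : vcNum (emptyBisector G) * Fintype.card W +
      (Fintype.card V - vcNum (emptyBisector G)) + betaStar G ∈
      {n | ∃ S : Set (V ⊕ V × W), IsDistEqSet (corona G H) S ∧ S.ncard = n} := by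
    refine ⟨desSet U L, upper_isDES hG hU hL hFE, ?_⟩
    rw [desSet_ncard, hLcard, hUcard]
    ring
  rw [eqdim]
  refine le_antisymm (Nat.sInf_le hmem) (le_csInf ⟨_, hmem⟩ ?_)
  rintro n ⟨S, hSdes, rfl⟩
  exact lower_bound hG hSdes
/-- If there are vertex covers `U, L` of `Ĝ` with `(U, L)` a
forward-equalized pair of `G`, `|U ∩ L| = β*(G)` and `|U| = β(Ĝ)`, then
`ξ(G ⊙ H) = β(Ĝ)·n(H) + α(Ĝ) + β*(G)`. -/
theorem eqdim_corona_eq_lower_bound [Fintype V] [Fintype W] [Nonempty W]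
    (G : SimpleGraph V) (H : SimpleGraph W) (hG : G.Connected)
    (U L : Set V) (hU : IsVertexCover (emptyBisector G) U)
    (hL : IsVertexCover (emptyBisector G) L)
    (hFE : IsForwardEqualizedPair G U L)
    (hcap : (U ∩ L).ncard = betaStar G)
    (hUcard : U.ncard = vcNum (emptyBisector G)) :
    eqdim (corona G H) =
      vcNum (emptyBisector G) * Fintype.card W + indepNum (emptyBisector G) + betaStar G := by
  exact eqdim_corona_eq_lower_bound' G H hG U L hU hL hFE hcap hUcard
end

section
/- Let G be a finite simple connected graph and H any finite simple graph. Then ξ(G⊙H) = n(G) if and only if either β(Ĝ) = 0, or (n(H) = 1 and β*(G) = 0). -/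
universe u v

variable {V : Type u} {W : Type v}

namespace CoronaAux

open SimpleGraph

def proj : V ⊕ V × W → V := Sum.elim id Prod.fst

open Classical in
noncomputable def cst : V ⊕ V × W → V ⊕ V × W → ℕ
  | Sum.inl _, Sum.inl _ => 0
  | Sum.inl _, Sum.inr _ => 1
  | Sum.inr _, Sum.inl _ => 1
  | Sum.inr p, Sum.inr q => if p.1 = q.1 then 0 else 2

@[simp] lemma proj_inl (a : V) : proj (Sum.inl a : V ⊕ V × W) = a := rfl
@[simp] lemma proj_inr (p : V × W) : proj (Sum.inr p : V ⊕ V × W) = p.1 := rfl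

@[simp] lemma cst_inl_inl (a b : V) : cst (W := W) (Sum.inl a) (Sum.inl b) = 0 := rfl
@[simp] lemma cst_inl_inr (a : V) (p : V × W) : cst (Sum.inl a) (Sum.inr p) = 1 := rfl
@[simp] lemma cst_inr_inl (a : V) (p : V × W) : cst (Sum.inr p) (Sum.inl a) = 1 := rfl
lemma cst_inr_inr_ne {p q : V × W} (h : p.1 ≠ q.1) : cst (Sum.inr p) (Sum.inr q) = 2 := by
  simp only [cst]; rw [if_neg h]
lemma cst_self (x : V ⊕ V × W) : cst x x = 0 := by
  rcases x with a | p
  · rfl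
  · simp [cst]
lemma cst_inr_inr_le (p q : V × W) : cst (Sum.inr p) (Sum.inr q) ≤ 2 := by
  simp only [cst]; split <;> omega

variable {G : SimpleGraph V} {H : SimpleGraph W}

def inlHom (G : SimpleGraph V) (H : SimpleGraph W) : G →g corona G H :=
  ⟨Sum.inl, fun h => h⟩

lemma adj_inl_inr (a : V) (w : W) : (corona G H).Adj (Sum.inl a) (Sum.inr (a, w)) := rfl

lemma adj_inr_inl (a : V) (w : W) : (corona G H).Adj (Sum.inr (a, w)) (Sum.inl a) := rfl

lemma length_bound (hG : G.Connected) {x y : V ⊕ V × W} (p : (corona G H).Walk x y) :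
    G.dist (proj x) (proj y) + cst x y ≤ p.length := by
  induction p with
  | nil => simp [cst_self, SimpleGraph.dist_self]
  | @cons x z y h q ih =>
    rw [SimpleGraph.Walk.length_cons]
    rcases x with a | p <;> rcases z with b | r
    · have hadj : G.Adj a b := h
      have ht : G.dist a (proj y) ≤ G.dist a b + G.dist b (proj y) := hG.dist_triangle
      have hd : G.dist a b ≤ 1 := by
        simpa using SimpleGraph.dist_le (SimpleGraph.Walk.cons hadj SimpleGraph.Walk.nil)
      have hc : cst (Sum.inl a) y = cst (Sum.inl b) y := by rcases y with c | s <;> rfl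
      simp only [proj_inl] at ih ⊢
      omega
    · have hab : a = r.1 := h
      subst hab
      have hc : cst (Sum.inl r.1) y ≤ cst (Sum.inr r) y + 1 := by
        rcases y with c | s
        · simp
        · simp only [cst_inl_inr]
          omega
      simp only [proj_inl, proj_inr] at ih ⊢
      omega
    · have hab : b = p.1 := h
      subst hab
      have hc : cst (Sum.inr p) y ≤ cst (Sum.inl p.1) y + 1 := by
        rcases y with c | s
        · simp
        · have := cst_inr_inr_le p s
          simp only [cst_inl_inr]
          omega
      simp only [proj_inl, proj_inr] at ih ⊢
      omega
    · obtain ⟨p1, pw⟩ := p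
      obtain ⟨r1, rw'⟩ := r
      have hab : p1 = r1 := h.1
      subst hab
      have hc : cst (Sum.inr (p1, pw)) y = cst (Sum.inr (p1, rw')) y := by
        rcases y with c | s
        · rfl
        · simp only [cst]
      simp only [proj_inl, proj_inr] at ih ⊢
      omega

lemma walk_inl_inl (hG : G.Connected) (a b : V) :
    ∃ p : (corona G H).Walk (Sum.inl a) (Sum.inl b), p.length = G.dist a b := by
  obtain ⟨p, hp⟩ := hG.exists_walk_length_eq_dist a b
  exact ⟨p.map (inlHom G H), (SimpleGraph.Walk.length_map _ _).trans hp⟩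

lemma dist_inl_inl (hG : G.Connected) (a b : V) :
    (corona G H).dist (Sum.inl a) (Sum.inl b) = G.dist a b := by
  obtain ⟨p, hp⟩ := walk_inl_inl (H := H) hG a b
  refine le_antisymm (hp ▸ SimpleGraph.dist_le p) ?_
  obtain ⟨q, hq⟩ := p.reachable.exists_walk_length_eq_dist
  have := length_bound hG q
  simp only [proj_inl, cst_inl_inl, Nat.add_zero] at this
  omega

lemma dist_inl_inr (hG : G.Connected) (a b : V) (w : W) :
    (corona G H).dist (Sum.inl a) (Sum.inr (b, w)) = G.dist a b + 1 := by
  obtain ⟨p, hp⟩ := walk_inl_inl (H := H) hG a b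
  refine le_antisymm ?_ ?_
  · have := SimpleGraph.dist_le (p.concat (adj_inl_inr b w))
    rwa [SimpleGraph.Walk.length_concat, hp] at this
  · obtain ⟨q, hq⟩ := (p.concat (adj_inl_inr b w)).reachable.exists_walk_length_eq_dist
    have := length_bound hG q
    simp only [proj_inl, proj_inr, cst_inl_inr] at this
    omega

lemma dist_inr_inl (hG : G.Connected) (a b : V) (w : W) :
    (corona G H).dist (Sum.inr (b, w)) (Sum.inl a) = G.dist a b + 1 := by
  rw [SimpleGraph.dist_comm, dist_inl_inr hG]

lemma dist_inr_inr (hG : G.Connected) {a b : V} (hab : a ≠ b) (w w' : W) :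
    (corona G H).dist (Sum.inr (a, w)) (Sum.inr (b, w')) = G.dist a b + 2 := by
  obtain ⟨p, hp⟩ := walk_inl_inl (H := H) hG a b
  refine le_antisymm ?_ ?_
  · have := SimpleGraph.dist_le
      (SimpleGraph.Walk.cons (adj_inr_inl a w) (p.concat (adj_inl_inr b w')))
    rw [SimpleGraph.Walk.length_cons, SimpleGraph.Walk.length_concat, hp] at this
    omega
  · obtain ⟨q, hq⟩ := (SimpleGraph.Walk.cons (adj_inr_inl a w)
      (p.concat (adj_inl_inr b w'))).reachable.exists_walk_length_eq_dist
    have := length_bound hG q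
    rw [cst_inr_inr_ne hab] at this
    simp only [proj_inr] at this
    omega

lemma dist_inr_inr_same (a : V) (w w' : W) :
    (corona G H).dist (Sum.inr (a, w)) (Sum.inr (a, w')) ≤ 2 := by
  simpa using SimpleGraph.dist_le (SimpleGraph.Walk.cons (adj_inr_inl (G := G) (H := H) a w)
    (SimpleGraph.Walk.cons (adj_inl_inr a w') SimpleGraph.Walk.nil))

section Comb

variable [Nonempty W]

lemma fiber (hG : G.Connected) {S : Set (V ⊕ V × W)} (hS : IsDistEqSet (corona G H) S) (i : V) :
    ∃ x ∈ S, proj x = i := by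
  by_contra hc
  push_neg at hc
  obtain ⟨w₀⟩ := ‹Nonempty W›
  have h1 : (Sum.inl i : V ⊕ V × W) ∉ S := fun h => hc _ h rfl
  have h2 : (Sum.inr (i, w₀) : V ⊕ V × W) ∉ S := fun h => hc _ h rfl
  obtain ⟨t, htS, htd⟩ := hS h1 h2 (by simp)
  rcases t with k | ⟨k, w⟩
  · have hk : k ≠ i := by simpa using hc _ htS
    rw [dist_inl_inl hG, dist_inl_inr hG] at htd
    omega
  · have hk : k ≠ i := by simpa using hc _ htS
    rw [dist_inr_inl hG, dist_inr_inr hG hk, SimpleGraph.dist_comm] at htd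
    omega

lemma ncard_lower (hG : G.Connected) [Fintype V] [Fintype W] {S : Set (V ⊕ V × W)}
    (hS : IsDistEqSet (corona G H) S) : Fintype.card V ≤ S.ncard := by
  choose f hf1 hf2 using fiber (H := H) hG hS
  have hinj : Function.Injective f := fun i j hij => by
    rw [← hf2 i, ← hf2 j, hij]
  have h1 : Set.range f ⊆ S := by rintro _ ⟨i, rfl⟩; exact hf1 i
  have h2 : (Set.range f).ncard = Fintype.card V := by
    rw [← Set.image_univ, Set.ncard_image_of_injective _ hinj, Set.ncard_univ,
      Nat.card_eq_fintype_card]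
  rw [← h2]
  exact Set.ncard_le_ncard h1 S.toFinite

lemma eqdim_iff (hG : G.Connected) [Fintype V] [Fintype W] :
    eqdim (corona G H) = Fintype.card V ↔
      ∃ S : Set (V ⊕ V × W), IsDistEqSet (corona G H) S ∧ S.ncard = Fintype.card V := by
  have hb : ∀ n ∈ {n | ∃ S : Set (V ⊕ V × W), IsDistEqSet (corona G H) S ∧ S.ncard = n},
      Fintype.card V ≤ n := by
    rintro n ⟨S, h1, rfl⟩
    exact ncard_lower hG h1
  constructor
  · intro h
    have hne : {n | ∃ S : Set (V ⊕ V × W),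
        IsDistEqSet (corona G H) S ∧ S.ncard = n}.Nonempty :=
      ⟨_, Set.univ, fun x y hx _ _ => absurd (Set.mem_univ x) hx, rfl⟩
    have := Nat.sInf_mem hne
    rwa [show sInf {n | ∃ S : Set (V ⊕ V × W), IsDistEqSet (corona G H) S ∧ S.ncard = n}
      = Fintype.card V from h] at this
  · rintro ⟨S, h1, h2⟩
    exact le_antisymm (Nat.sInf_le ⟨S, h1, h2⟩)
      (le_csInf ⟨_, S, h1, h2⟩ hb)

omit [Nonempty W] in
lemma suff_inl (hG : G.Connected) [Fintype V] [Fintype W]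
    (hbis : ∀ i j : V, i ≠ j → ∃ k, G.dist k i = G.dist k j) :
    ∃ S : Set (V ⊕ V × W), IsDistEqSet (corona G H) S ∧ S.ncard = Fintype.card V := by
  refine ⟨Set.range Sum.inl, ?_, ?_⟩
  · rintro x y hx hy hxy
    rcases x with a | ⟨a, w⟩
    · exact absurd ⟨a, rfl⟩ hx
    rcases y with b | ⟨b, w'⟩
    · exact absurd ⟨b, rfl⟩ hy
    by_cases hab : a = b
    · subst hab
      exact ⟨Sum.inl a, ⟨a, rfl⟩, by rw [dist_inl_inr hG, dist_inl_inr hG]⟩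
    · obtain ⟨k, hk⟩ := hbis a b hab
      exact ⟨Sum.inl k, ⟨k, rfl⟩, by rw [dist_inl_inr hG, dist_inl_inr hG, hk]⟩
  · rw [← Set.image_univ, Set.ncard_image_of_injective _ Sum.inl_injective, Set.ncard_univ,
      Nat.card_eq_fintype_card]

end Comb

end CoronaAux

/-- `ξ(G ⊙ H) = n(G)` iff `β(Ĝ) = 0`, or `n(H) = 1` and `β*(G) = 0`. -/
theorem eqdim_corona_eq_card_iff [Fintype V] [Fintype W] [Nonempty W]
    (G : SimpleGraph V) (H : SimpleGraph W) (hG : G.Connected) :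
    eqdim (corona G H) = Fintype.card V ↔
      vcNum (emptyBisector G) = 0 ∨ (Fintype.card W = 1 ∧ betaStar G = 0) := by

  classical
  rw [CoronaAux.eqdim_iff (H := H) hG]
  constructor
  · rintro ⟨S, hS, hcard⟩
    have hsurj := CoronaAux.fiber (H := H) hG hS
    have himg : CoronaAux.proj '' S = Set.univ := by
      ext i
      simp only [Set.mem_image, Set.mem_univ, iff_true]
      obtain ⟨x, hx1, hx2⟩ := hsurj i
      exact ⟨x, hx1, hx2⟩
    have hinj : Set.InjOn CoronaAux.proj S := by
      refine Set.injOn_of_ncard_image_eq ?_ S.toFinite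
      rw [himg, Set.ncard_univ, Nat.card_eq_fintype_card, hcard]
    choose s hs1 hs2 using hsurj
    have hmem : ∀ x ∈ S, x = s (CoronaAux.proj x) := fun x hx =>
      hinj hx (hs1 _) (by rw [hs2])
    rcases eq_or_lt_of_le (Nat.one_le_iff_ne_zero.mpr (Fintype.card_ne_zero (α := W)))
      with hW | hW
    · -- card W = 1
      right
      refine ⟨hW.symm, ?_⟩
      obtain ⟨w₀, hw₀⟩ := Fintype.card_eq_one_iff.mp hW.symm
      have hchar : ∀ i, s i = Sum.inl i ∨ s i = Sum.inr (i, w₀) := by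
        intro i
        have h2 := hs2 i
        rcases hsi : s i with k | ⟨k, w⟩
        · left; rw [hsi] at h2; simp only [CoronaAux.proj_inl] at h2; rw [h2]
        · right; rw [hsi] at h2; simp only [CoronaAux.proj_inr] at h2
          rw [h2, hw₀ w]
      have hinlS : ∀ i, (Sum.inl i : V ⊕ V × W) ∈ S ↔ s i = Sum.inl i := fun i =>
        ⟨fun h => (hmem _ h).symm, fun h => h ▸ hs1 i⟩
      have hinrS : ∀ i w, (Sum.inr (i, w) : V ⊕ V × W) ∈ S ↔ s i = Sum.inr (i, w) :=
        fun i w => ⟨fun h => (hmem _ h).symm, fun h => h ▸ hs1 i⟩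
      have hcovY : IsVertexCover (emptyBisector G) {i | s i = Sum.inl i} := by
        intro i j hadj
        by_contra hc
        push_neg at hc
        obtain ⟨hiX, hjX⟩ := hc
        simp only [Set.mem_setOf_eq] at hiX hjX
        obtain ⟨hij, hbis⟩ := hadj
        have hbis' : ∀ k, G.dist k i ≠ G.dist k j := fun k hk =>
          Set.eq_empty_iff_forall_notMem.mp hbis k hk
        have hIS : (Sum.inl i : V ⊕ V × W) ∉ S := fun h => hiX ((hinlS i).mp h)
        have hJS : (Sum.inl j : V ⊕ V × W) ∉ S := fun h => hjX ((hinlS j).mp h)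
        obtain ⟨t, htS, htd⟩ := hS hIS hJS (by simp [hij])
        rcases t with k | ⟨k, w⟩
        · rw [CoronaAux.dist_inl_inl hG, CoronaAux.dist_inl_inl hG] at htd
          exact hbis' k htd
        · rw [CoronaAux.dist_inr_inl hG, CoronaAux.dist_inr_inl hG] at htd
          refine hbis' k ?_
          rw [SimpleGraph.dist_comm (u := k) (v := i), SimpleGraph.dist_comm (u := k) (v := j)]
          omega
      have hcovX : IsVertexCover (emptyBisector G) {i | s i ≠ Sum.inl i} := by
        intro i j hadj
        by_contra hc
        push_neg at hc
        obtain ⟨hiY, hjY⟩ := hc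
        simp only [Set.mem_setOf_eq, not_not] at hiY hjY
        obtain ⟨hij, hbis⟩ := hadj
        have hbis' : ∀ k, G.dist k i ≠ G.dist k j := fun k hk =>
          Set.eq_empty_iff_forall_notMem.mp hbis k hk
        have hIS : (Sum.inr (i, w₀) : V ⊕ V × W) ∉ S := fun h => by
          have h2 := (hinrS i w₀).mp h
          rw [hiY] at h2
          exact Sum.inl_ne_inr h2
        have hJS : (Sum.inr (j, w₀) : V ⊕ V × W) ∉ S := fun h => by
          have h2 := (hinrS j w₀).mp h
          rw [hjY] at h2
          exact Sum.inl_ne_inr h2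
        obtain ⟨t, htS, htd⟩ := hS hIS hJS (by simp [hij])
        rcases t with k | ⟨k, w⟩
        · rw [CoronaAux.dist_inl_inr hG, CoronaAux.dist_inl_inr hG] at htd
          exact hbis' k (by omega)
        · have hsk : s k = Sum.inr (k, w) := ((hinrS k w).mp htS)
          have hki : k ≠ i := by rintro rfl; rw [hiY] at hsk; exact Sum.inl_ne_inr hsk
          have hkj : k ≠ j := by rintro rfl; rw [hjY] at hsk; exact Sum.inl_ne_inr hsk
          rw [CoronaAux.dist_inr_inr hG hki, CoronaAux.dist_inr_inr hG hkj] at htd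
          exact hbis' k (by omega)
      have hfwd : IsForwardEqualizedPair G {i | s i ≠ Sum.inl i} {i | s i = Sum.inl i} := by
        constructor
        · apply Set.eq_univ_iff_forall.mpr
          intro i
          rcases em (s i = Sum.inl i) with h | h
          · exact Or.inr h
          · exact Or.inl h
        · rintro a ⟨haX, -⟩ b ⟨hbY, -⟩
          simp only [Set.mem_setOf_eq] at haX hbY
          have hIS : (Sum.inl a : V ⊕ V × W) ∉ S := fun h => haX ((hinlS a).mp h)
          have hJS : (Sum.inr (b, w₀) : V ⊕ V × W) ∉ S := fun h => by
            have h2 := (hinrS b w₀).mp h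
            rw [hbY] at h2
            exact Sum.inl_ne_inr h2
          obtain ⟨t, htS, htd⟩ := hS hIS hJS (by simp)
          rcases t with k | ⟨k, w⟩
          · rw [CoronaAux.dist_inl_inl hG, CoronaAux.dist_inl_inr hG] at htd
            exact ⟨k, htd⟩
          · have hsk : s k = Sum.inr (k, w) := ((hinrS k w).mp htS)
            have hkb : k ≠ b := by rintro rfl; rw [hbY] at hsk; exact Sum.inl_ne_inr hsk
            rw [CoronaAux.dist_inr_inl hG, CoronaAux.dist_inr_inr hG hkb] at htd
            refine ⟨k, ?_⟩
            rw [SimpleGraph.dist_comm (u := k) (v := a)]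
            omega
      have hncard : ({i | s i ≠ Sum.inl i} ∩ {i | s i = Sum.inl i}).ncard = 0 := by
        have he : ({i | s i ≠ Sum.inl i} ∩ {i | s i = Sum.inl i} : Set V) = ∅ := by
          ext i
          simp only [Set.mem_inter_iff, Set.mem_setOf_eq, Set.mem_empty_iff_false, iff_false]
          rintro ⟨h1, h2⟩
          exact h1 h2
        rw [he, Set.ncard_empty]
      exact Nat.sInf_eq_zero.mpr (Or.inl ⟨_, _, hcovX, hcovY, hfwd, hncard⟩)
    · -- 1 < card W
      left
      have hno : ∀ i j : V, ¬ (emptyBisector G).Adj i j := by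
        rintro i j ⟨hij, hbis⟩
        have hbis' : ∀ k, G.dist k i ≠ G.dist k j := fun k hk =>
          Set.eq_empty_iff_forall_notMem.mp hbis k hk
        have hfind : ∀ a : V, ∃ w : W, (Sum.inr (a, w) : V ⊕ V × W) ∉ S := by
          intro a
          by_contra hcon
          push_neg at hcon
          obtain ⟨w1, w2, hw12⟩ := Fintype.exists_pair_of_one_lt_card hW
          have h1 := hmem _ (hcon w1)
          have h2 := hmem _ (hcon w2)
          exact hw12 (by simpa using h1.trans h2.symm)
        obtain ⟨wi, hwi⟩ := hfind i
        obtain ⟨wj, hwj⟩ := hfind j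
        obtain ⟨t, htS, htd⟩ := hS hwi hwj (by simp [hij])
        rcases t with k | ⟨k, w⟩
        · rw [CoronaAux.dist_inl_inr hG, CoronaAux.dist_inl_inr hG] at htd
          exact hbis' k (by omega)
        · by_cases hki : k = i
          · have h1 : (corona G H).dist (Sum.inr (k, w)) (Sum.inr (i, wi)) ≤ 2 := by
              rw [hki]; exact CoronaAux.dist_inr_inr_same i w wi
            have h2 : (corona G H).dist (Sum.inr (k, w)) (Sum.inr (j, wj))
                = G.dist k j + 2 := CoronaAux.dist_inr_inr hG (by rw [hki]; exact hij) w wj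
            have h3 : 0 < G.dist k j := by rw [hki]; exact hG.pos_dist_of_ne hij
            rw [h2] at htd
            omega
          · by_cases hkj : k = j
            · have h1 : (corona G H).dist (Sum.inr (k, w)) (Sum.inr (j, wj)) ≤ 2 := by
                rw [hkj]; exact CoronaAux.dist_inr_inr_same j w wj
              have h2 : (corona G H).dist (Sum.inr (k, w)) (Sum.inr (i, wi))
                  = G.dist k i + 2 := CoronaAux.dist_inr_inr hG hki w wi
              have h3 : 0 < G.dist k i := hG.pos_dist_of_ne hki
              rw [h2] at htd
              omega
            · rw [CoronaAux.dist_inr_inr hG hki, CoronaAux.dist_inr_inr hG hkj] at htd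
              exact hbis' k (by omega)
      exact Nat.sInf_eq_zero.mpr
        (Or.inl ⟨∅, fun x y h => absurd h (hno x y), Set.ncard_empty _⟩)
  · rintro (hvc | ⟨hW1, hbs⟩)
    · have h0 : 0 ∈ {n | ∃ C : Set V, IsVertexCover (emptyBisector G) C ∧ C.ncard = n} := by
        rcases Nat.sInf_eq_zero.mp hvc with h | h
        · exact h
        · exfalso
          have hne : ((Set.univ : Set V).ncard) ∈
              {n | ∃ C : Set V, IsVertexCover (emptyBisector G) C ∧ C.ncard = n} :=
            ⟨Set.univ, fun x y _ => Or.inl trivial, rfl⟩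
          rw [h] at hne
          exact hne
      obtain ⟨C, hC, hC0⟩ := h0
      rw [Set.ncard_eq_zero] at hC0
      subst hC0
      have hbis : ∀ i j : V, i ≠ j → ∃ k, G.dist k i = G.dist k j := by
        intro i j hij
        by_contra hc
        push_neg at hc
        have hadj : (emptyBisector G).Adj i j :=
          ⟨hij, Set.eq_empty_iff_forall_notMem.mpr fun k hk => hc k hk⟩
        rcases hC hadj with h | h <;> exact absurd h (Set.notMem_empty _)
      exact CoronaAux.suff_inl hG hbis
    · obtain ⟨w₀, hw₀⟩ := Fintype.card_eq_one_iff.mp hW1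
      have h0 : 0 ∈ {n | ∃ X Y : Set V,
          IsVertexCover (emptyBisector G) X ∧ IsVertexCover (emptyBisector G) Y ∧
          IsForwardEqualizedPair G X Y ∧ (X ∩ Y).ncard = n} := by
        rcases Nat.sInf_eq_zero.mp hbs with h | h
        · exact h
        · exfalso
          have hne : ((Set.univ ∩ Set.univ : Set V).ncard) ∈ {n | ∃ X Y : Set V,
              IsVertexCover (emptyBisector G) X ∧ IsVertexCover (emptyBisector G) Y ∧
              IsForwardEqualizedPair G X Y ∧ (X ∩ Y).ncard = n} :=
            ⟨Set.univ, Set.univ, fun x y _ => Or.inl trivial, fun x y _ => Or.inl trivial,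
              ⟨Set.univ_union _, fun a ha b hb => absurd (Set.mem_univ a) ha.2⟩, rfl⟩
          rw [h] at hne
          exact hne
      obtain ⟨X, Y, hcovX, hcovY, ⟨hun, hfwd⟩, hXY⟩ := h0
      rw [Set.ncard_eq_zero] at hXY
      have hdisj : ∀ a, a ∈ X → a ∉ Y := fun a ha hb => by
        have h : a ∈ X ∩ Y := ⟨ha, hb⟩
        rw [hXY] at h
        exact h
      have hYX : ∀ a, a ∉ X → a ∈ Y := fun a ha => by
        have h : a ∈ X ∪ Y := Set.eq_univ_iff_forall.mp hun a
        rcases h with h | h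
        · exact absurd h ha
        · exact h
      set s : V → V ⊕ V × W := fun i => if i ∈ X then Sum.inr (i, w₀) else Sum.inl i with hs
      have hproj : ∀ i, CoronaAux.proj (s i) = i := fun i => by
        by_cases h : i ∈ X <;> simp [hs, h]
      have hsinj : Function.Injective s := fun i j hij => by
        rw [← hproj i, ← hproj j, hij]
      have hinlS : ∀ i, (Sum.inl i : V ⊕ V × W) ∈ Set.range s ↔ i ∉ X := by
        intro i
        constructor
        · rintro ⟨j, hj⟩
          by_cases hjX : j ∈ X
          · rw [hs] at hj; simp [hjX] at hj
          · rw [hs] at hj; simp only [if_neg hjX, Sum.inl.injEq] at hj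
            rwa [← hj]
        · intro h
          exact ⟨i, by simp [hs, h]⟩
      have hinrS : ∀ i w, (Sum.inr (i, w) : V ⊕ V × W) ∈ Set.range s ↔ i ∈ X := by
        intro i w
        constructor
        · rintro ⟨j, hj⟩
          by_cases hjX : j ∈ X
          · rw [hs] at hj
            simp only [if_pos hjX, Sum.inr.injEq, Prod.mk.injEq] at hj
            rwa [hj.1] at hjX
          · rw [hs] at hj; simp [hjX] at hj
        · intro h
          exact ⟨i, by simp [hs, h, hw₀ w]⟩
      refine ⟨Set.range s, ?_, ?_⟩
      · rintro x y hx hy hxy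
        have hbisne : ∀ a b : V, a ∉ Y → b ∉ Y → a ≠ b →
            ∃ k, G.dist k a = G.dist k b := by
          intro a b ha hb hab
          by_contra hc
          push_neg at hc
          have hadj : (emptyBisector G).Adj a b :=
            ⟨hab, Set.eq_empty_iff_forall_notMem.mpr fun k hk => hc k hk⟩
          rcases hcovY hadj with h | h
          · exact ha h
          · exact hb h
        have hbisne' : ∀ a b : V, a ∉ X → b ∉ X → a ≠ b →
            ∃ k, G.dist k a = G.dist k b := by
          intro a b ha hb hab
          by_contra hc
          push_neg at hc
          have hadj : (emptyBisector G).Adj a b :=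
            ⟨hab, Set.eq_empty_iff_forall_notMem.mpr fun k hk => hc k hk⟩
          rcases hcovX hadj with h | h
          · exact ha h
          · exact hb h
        rcases x with a | ⟨a, w⟩ <;> rcases y with b | ⟨b, w'⟩
        · -- inl a, inl b
          have haX : a ∈ X := by by_contra h; exact hx ((hinlS a).mpr h)
          have hbX : b ∈ X := by by_contra h; exact hy ((hinlS b).mpr h)
          have hab : a ≠ b := fun h => hxy (by rw [h])
          obtain ⟨k, hk⟩ := hbisne a b (hdisj a haX) (hdisj b hbX) hab
          by_cases hkX : k ∈ X
          · refine ⟨Sum.inr (k, w₀), (hinrS k w₀).mpr hkX, ?_⟩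
            rw [CoronaAux.dist_inr_inl hG, CoronaAux.dist_inr_inl hG,
              SimpleGraph.dist_comm (u := a) (v := k),
              SimpleGraph.dist_comm (u := b) (v := k), hk]
          · refine ⟨Sum.inl k, (hinlS k).mpr hkX, ?_⟩
            rw [CoronaAux.dist_inl_inl hG, CoronaAux.dist_inl_inl hG, hk]
        · -- inl a, inr (b, w')
          have haX : a ∈ X := by by_contra h; exact hx ((hinlS a).mpr h)
          have hbX : b ∉ X := fun h => hy ((hinrS b w').mpr h)
          obtain ⟨k, hk⟩ := hfwd ⟨haX, hdisj a haX⟩ ⟨hYX b hbX, hbX⟩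
          by_cases hkX : k ∈ X
          · have hkb : k ≠ b := fun e => hbX (e ▸ hkX)
            refine ⟨Sum.inr (k, w₀), (hinrS k w₀).mpr hkX, ?_⟩
            rw [CoronaAux.dist_inr_inl hG, CoronaAux.dist_inr_inr hG hkb,
              SimpleGraph.dist_comm (u := a) (v := k)]
            omega
          · refine ⟨Sum.inl k, (hinlS k).mpr hkX, ?_⟩
            rw [CoronaAux.dist_inl_inl hG, CoronaAux.dist_inl_inr hG, hk]
        · -- inr (a, w), inl b
          have haX : a ∉ X := fun h => hx ((hinrS a w).mpr h)
          have hbX : b ∈ X := by by_contra h; exact hy ((hinlS b).mpr h)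
          obtain ⟨k, hk⟩ := hfwd ⟨hbX, hdisj b hbX⟩ ⟨hYX a haX, haX⟩
          by_cases hkX : k ∈ X
          · have hka : k ≠ a := fun e => haX (e ▸ hkX)
            refine ⟨Sum.inr (k, w₀), (hinrS k w₀).mpr hkX, ?_⟩
            rw [CoronaAux.dist_inr_inl hG, CoronaAux.dist_inr_inr hG hka,
              SimpleGraph.dist_comm (u := b) (v := k)]
            omega
          · refine ⟨Sum.inl k, (hinlS k).mpr hkX, ?_⟩
            rw [CoronaAux.dist_inl_inl hG, CoronaAux.dist_inl_inr hG, hk]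
        · -- inr (a, w), inr (b, w')
          have haX : a ∉ X := fun h => hx ((hinrS a w).mpr h)
          have hbX : b ∉ X := fun h => hy ((hinrS b w').mpr h)
          have hab : a ≠ b := fun e => hxy (by rw [e, hw₀ w, hw₀ w'])
          obtain ⟨k, hk⟩ := hbisne' a b haX hbX hab
          by_cases hkX : k ∈ X
          · have hka : k ≠ a := fun e => haX (e ▸ hkX)
            have hkb : k ≠ b := fun e => hbX (e ▸ hkX)
            refine ⟨Sum.inr (k, w₀), (hinrS k w₀).mpr hkX, ?_⟩
            rw [CoronaAux.dist_inr_inr hG hka, CoronaAux.dist_inr_inr hG hkb, hk]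
          · refine ⟨Sum.inl k, (hinlS k).mpr hkX, ?_⟩
            rw [CoronaAux.dist_inl_inr hG, CoronaAux.dist_inl_inr hG, hk]
      · rw [← Set.image_univ, Set.ncard_image_of_injective _ hsinj, Set.ncard_univ,
          Nat.card_eq_fintype_card]
end
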